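/- If f ∈ ℚ[x] is p^r-Dumas (i.e., pure at p of slope −r/deg f with gcd(r, deg f) = 1), then the second iterate f ∘ f is irreducible over ℚ. -/

import Mathlib

open Polynomial

/-- `f ∈ ℚ[x]` is `p^r`-Dumas: its `p`-adic Newton polygon is a single segment from
`(0, r)` to `(deg f, 0)` (slope `-r/deg f`) and `gcd(r, deg f) = 1`. -/
def IsDumas (p r : ℕ) (f : Polynomial ℚ) : Prop :=
  1 ≤ f.natDegree ∧ Nat.Coprime r f.natDegree ∧
  f.coeff 0 ≠ 0 ∧ padicValRat p (f.coeff 0) = (r : ℤ) ∧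
  padicValRat p f.leadingCoeff = 0 ∧
  ∀ i ≤ f.natDegree, f.coeff i ≠ 0 →
    (r : ℝ) * (1 - (i : ℝ) / (f.natDegree : ℝ)) ≤ (padicValRat p (f.coeff i) : ℝ)

/-- The `n`-th iterate `f ∘ ⋯ ∘ f` of a polynomial (with `polyIter f 0 = X`). -/
noncomputable def polyIter {R : Type*} [CommSemiring R] (f : Polynomial R) : ℕ → Polynomial R
  | 0 => Polynomial.X
  | n + 1 => f.comp (polyIter f n)

section Helpers

variable {p : ℕ} [hp : Fact p.Prime]

/-- Lower bound for the valuation of a finite sum. -/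
private lemma pv_sum {ι : Type*} (s : Finset ι) (g : ι → ℚ) (C : ℚ)
    (h : ∀ i ∈ s, g i ≠ 0 → C ≤ (padicValRat p (g i) : ℚ))
    (hs : ∑ i ∈ s, g i ≠ 0) : C ≤ (padicValRat p (∑ i ∈ s, g i) : ℚ) := by
  classical
  induction s using Finset.cons_induction with
  | empty => simp at hs
  | cons a s ha ih =>
    rw [Finset.sum_cons] at hs ⊢
    by_cases h0 : ∑ i ∈ s, g i = 0
    · rw [h0, add_zero] at hs ⊢
      exact h a (Finset.mem_cons_self a s) hs
    · have hrest := ih (fun i hi => h i (Finset.mem_cons_of_mem hi)) h0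
      by_cases hga : g a = 0
      · rw [hga, zero_add] at hs ⊢; exact hrest
      · have h2 := padicValRat.min_le_padicValRat_add (p := p) hs
        have hma : C ≤ (padicValRat p (g a) : ℚ) :=
          h a (Finset.mem_cons_self a s) hga
        refine le_trans (le_min hma hrest) ?_
        exact_mod_cast h2

/-- If one term of a sum has strictly smaller valuation than all other (nonzero) terms,
then the sum is nonzero and its valuation is that of the distinguished term. -/
private lemma pv_sum_eq {ι : Type*} [DecidableEq ι] (s : Finset ι) (g : ι → ℚ) (i₀ : ι)
    (hi₀ : i₀ ∈ s) (h0 : g i₀ ≠ 0)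
    (h : ∀ i ∈ s, i ≠ i₀ → g i ≠ 0 → padicValRat p (g i₀) < padicValRat p (g i)) :
    (∑ i ∈ s, g i) ≠ 0 ∧ padicValRat p (∑ i ∈ s, g i) = padicValRat p (g i₀) := by
  rw [← Finset.add_sum_erase s g hi₀]
  set rest := ∑ i ∈ s.erase i₀, g i with hrest_def
  by_cases hr : rest = 0
  · rw [hr, add_zero]; exact ⟨h0, rfl⟩
  · have hb : ((padicValRat p (g i₀) + 1 : ℤ) : ℚ) ≤ (padicValRat p rest : ℚ) := by
      refine pv_sum _ _ _ (fun i hi hgi => ?_) hr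
      have hlt := h i (Finset.mem_of_mem_erase hi) (Finset.ne_of_mem_erase hi) hgi
      exact_mod_cast Int.add_one_le_iff.mpr hlt
    have hlt : padicValRat p (g i₀) < padicValRat p rest := by
      have : (padicValRat p (g i₀) : ℚ) < (padicValRat p rest : ℚ) := by
        push_cast at hb; linarith
      exact_mod_cast this
    have hne : g i₀ + rest ≠ 0 := by
      intro hc
      have : rest = -g i₀ := by linarith [hc, eq_neg_of_add_eq_zero_right hc]
      rw [this, padicValRat.neg] at hlt
      exact lt_irrefl _ hlt
    exact ⟨hne, padicValRat.add_eq_of_lt hne h0 hr hlt⟩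

end Helpers

/-- The basic weight bound coming from purity: for all `k`,
`n·r ≤ n·v(aₖ) + r·k` whenever `aₖ ≠ 0`. -/
private lemma hA_of_isDumas (p r : ℕ) (f : Polynomial ℚ) (hf : IsDumas p r f) :
    ∀ k, f.coeff k ≠ 0 →
      (f.natDegree * r : ℤ) ≤ f.natDegree * padicValRat p (f.coeff k) + r * k := by
  obtain ⟨hdeg, _, _, _, _, hpure⟩ := hf
  intro k hk
  have hkn : k ≤ f.natDegree := le_natDegree_of_ne_zero hk
  have h1 := hpure k hkn hk
  have hnpos : (0 : ℝ) < (f.natDegree : ℝ) := by exact_mod_cast hdeg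
  have h2 : (f.natDegree : ℝ) * ((r : ℝ) * (1 - (k : ℝ) / (f.natDegree : ℝ)))
      ≤ (f.natDegree : ℝ) * (padicValRat p (f.coeff k) : ℝ) :=
    mul_le_mul_of_nonneg_left h1 (le_of_lt hnpos)
  have h3 : (f.natDegree : ℝ) * ((r : ℝ) * (1 - (k : ℝ) / (f.natDegree : ℝ)))
      = (f.natDegree : ℝ) * (r : ℝ) - (r : ℝ) * (k : ℝ) := by
    field_simp
  have h4 : ((f.natDegree * r : ℤ) : ℝ)
      ≤ ((f.natDegree * padicValRat p (f.coeff k) + r * k : ℤ) : ℝ) := by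
    push_cast
    rw [h3] at h2
    linarith
  exact_mod_cast h4

/-- The Eisenstein–Dumas irreducibility criterion. -/
private lemma isDumas_irreducible (p r : ℕ) (hp : p.Prime) (f : Polynomial ℚ)
    (hf : IsDumas p r f) : Irreducible f := by
  classical
  haveI : Fact p.Prime := ⟨hp⟩
  have hA := hA_of_isDumas p r f hf
  obtain ⟨hdeg, hcop, h0, hv0, hlead, hpure⟩ := hf
  set n := f.natDegree with hn
  have hfne : f ≠ 0 := fun h => h0 (by simp [h])
  constructor
  · intro hu
    rw [Polynomial.isUnit_iff_degree_eq_zero] at hu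
    have : n = 0 := natDegree_eq_zero_iff_degree_le_zero.mpr (le_of_eq hu)
    omega
  · rintro g h rfl
    by_contra hcon
    push_neg at hcon
    obtain ⟨hgu, hhu⟩ := hcon
    have hgne : g ≠ 0 := left_ne_zero_of_mul hfne
    have hhne : h ≠ 0 := right_ne_zero_of_mul hfne
    set s := g.natDegree with hs
    set t := h.natDegree with ht
    have hst : s + t = n := (Polynomial.natDegree_mul hgne hhne).symm
    have hs1 : 1 ≤ s := by
      rcases Nat.eq_zero_or_pos s with h1 | h1
      · exact absurd (Polynomial.isUnit_iff_degree_eq_zero.mpr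
          (by rw [Polynomial.degree_eq_natDegree hgne, ← hs, h1]; rfl)) hgu
      · exact h1
    have ht1 : 1 ≤ t := by
      rcases Nat.eq_zero_or_pos t with h1 | h1
      · exact absurd (Polynomial.isUnit_iff_degree_eq_zero.mpr
          (by rw [Polynomial.degree_eq_natDegree hhne, ← ht, h1]; rfl)) hhu
      · exact h1
    -- constant coefficients
    have hc0 : (g * h).coeff 0 = g.coeff 0 * h.coeff 0 := Polynomial.mul_coeff_zero g h
    have hb0 : g.coeff 0 ≠ 0 := fun hz => h0 (by rw [hc0, hz, zero_mul])
    have hc0' : h.coeff 0 ≠ 0 := fun hz => h0 (by rw [hc0, hz, mul_zero])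
    -- leading coefficients
    have hbs : g.coeff s ≠ 0 := by
      rw [hs, Polynomial.coeff_natDegree]; exact Polynomial.leadingCoeff_ne_zero.mpr hgne
    have hct : h.coeff t ≠ 0 := by
      rw [ht, Polynomial.coeff_natDegree]; exact Polynomial.leadingCoeff_ne_zero.mpr hhne
    -- weight functions
    set Fg : ℕ → ℤ := fun i => n * padicValRat p (g.coeff i) + r * i with hFg
    set Fh : ℕ → ℤ := fun i => n * padicValRat p (h.coeff i) + r * i with hFh
    set Sg := (Finset.range (s + 1)).filter (fun i => g.coeff i ≠ 0) with hSg
    set Sh := (Finset.range (t + 1)).filter (fun i => h.coeff i ≠ 0) with hSh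
    have hmemSg : ∀ i, g.coeff i ≠ 0 → i ∈ Sg := fun i hi => by
      simp only [hSg, Finset.mem_filter, Finset.mem_range]
      exact ⟨Nat.lt_succ_of_le (le_natDegree_of_ne_zero hi), hi⟩
    have hmemSh : ∀ i, h.coeff i ≠ 0 → i ∈ Sh := fun i hi => by
      simp only [hSh, Finset.mem_filter, Finset.mem_range]
      exact ⟨Nat.lt_succ_of_le (le_natDegree_of_ne_zero hi), hi⟩
    have hSgne : Sg.Nonempty := ⟨s, hmemSg s hbs⟩
    have hShne : Sh.Nonempty := ⟨t, hmemSh t hct⟩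
    set Wg := Sg.inf' hSgne Fg with hWg
    set Wh := Sh.inf' hShne Fh with hWh
    have hWg_le : ∀ i, g.coeff i ≠ 0 → Wg ≤ Fg i := fun i hi =>
      Finset.inf'_le Fg (hmemSg i hi)
    have hWh_le : ∀ i, h.coeff i ≠ 0 → Wh ≤ Fh i := fun i hi =>
      Finset.inf'_le Fh (hmemSh i hi)
    -- minimal attaining indices
    set Ag := Sg.filter (fun i => Fg i = Wg) with hAg
    set Ah := Sh.filter (fun i => Fh i = Wh) with hAh
    have hAgne : Ag.Nonempty := by
      obtain ⟨i, hi, hieq⟩ := Finset.exists_mem_eq_inf' hSgne Fg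
      exact ⟨i, by simp only [hAg, Finset.mem_filter]; exact ⟨hi, hieq.symm⟩⟩
    have hAhne : Ah.Nonempty := by
      obtain ⟨i, hi, hieq⟩ := Finset.exists_mem_eq_inf' hShne Fh
      exact ⟨i, by simp only [hAh, Finset.mem_filter]; exact ⟨hi, hieq.symm⟩⟩
    set α := Ag.min' hAgne with hα
    set γ := Ah.min' hAhne with hγ
    have hαmem : α ∈ Ag := Finset.min'_mem _ _
    have hγmem : γ ∈ Ah := Finset.min'_mem _ _
    have hαSg : g.coeff α ≠ 0 := by
      have := Finset.mem_filter.mp (Finset.mem_filter.mp hαmem).1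
      exact this.2
    have hγSh : h.coeff γ ≠ 0 := by
      have := Finset.mem_filter.mp (Finset.mem_filter.mp hγmem).1
      exact this.2
    have hαval : Fg α = Wg := (Finset.mem_filter.mp hαmem).2
    have hγval : Fh γ = Wh := (Finset.mem_filter.mp hγmem).2
    have hgstrict : ∀ i, g.coeff i ≠ 0 → i < α → Wg < Fg i := by
      intro i hi hlt
      rcases lt_or_eq_of_le (hWg_le i hi) with h1 | h1
      · exact h1
      · exact absurd (Finset.min'_le Ag i (by
          simp only [hAg, Finset.mem_filter]; exact ⟨hmemSg i hi, h1.symm⟩)) (by omega)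
    have hhstrict : ∀ i, h.coeff i ≠ 0 → i < γ → Wh < Fh i := by
      intro i hi hlt
      rcases lt_or_eq_of_le (hWh_le i hi) with h1 | h1
      · exact h1
      · exact absurd (Finset.min'_le Ah i (by
          simp only [hAh, Finset.mem_filter]; exact ⟨hmemSh i hi, h1.symm⟩)) (by omega)
    have hnpos : (0:ℤ) < (n:ℤ) := by exact_mod_cast hdeg
    -- the coefficient of index α + γ attains Wg + Wh
    have hterm0 : g.coeff α * h.coeff γ ≠ 0 := mul_ne_zero hαSg hγSh
    have key := pv_sum_eq (p := p) (Finset.HasAntidiagonal.antidiagonal (α + γ))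
        (fun x => g.coeff x.1 * h.coeff x.2) (α, γ)
        (by simp) hterm0 ?_
    swap
    · rintro ⟨i, j⟩ hij hne hnz
      simp only [Finset.HasAntidiagonal.mem_antidiagonal] at hij
      have hgi : g.coeff i ≠ 0 := left_ne_zero_of_mul hnz
      have hhj : h.coeff j ≠ 0 := right_ne_zero_of_mul hnz
      rw [padicValRat.mul hαSg hγSh, padicValRat.mul hgi hhj]
      have hine : i ≠ α := by
        intro hia
        apply hne
        subst hia
        have : j = γ := by omega
        subst this; rfl
      have hmain : Fg α + Fh γ < Fg i + Fh j := by
        rcases lt_or_gt_of_ne hine with h1 | h1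
        · have := hgstrict i hgi h1
          have h2 := hWh_le j hhj
          rw [hαval, hγval]; omega
        · have hjγ : j < γ := by omega
          have := hhstrict j hhj hjγ
          have h2 := hWg_le i hgi
          rw [hαval, hγval]; omega
      simp only [hFg, hFh] at hmain
      have hij' : (i : ℤ) + j = (α : ℤ) + γ := by exact_mod_cast hij
      nlinarith [hmain, hnpos]
    · -- extract the consequences
      obtain ⟨hne0, hveq⟩ := key
      rw [← Polynomial.coeff_mul] at hne0 hveq
      have hkey : (n * r : ℤ) ≤ Wg + Wh := by
        have h1 := hA (α + γ) hne0
        rw [hveq, padicValRat.mul hαSg hγSh] at h1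
        have h2 : Fg α + Fh γ = Wg + Wh := by rw [hαval, hγval]
        simp only [hFg, hFh] at h2
        push_cast at h1 h2 ⊢
        linarith
      -- upper bound from the constant coefficient
      have hv00 : padicValRat p (g.coeff 0) + padicValRat p (h.coeff 0) = (r : ℤ) := by
        rw [← padicValRat.mul hb0 hc0', ← hc0]
        exact hv0
      have hup : Wg + Wh ≤ (n * r : ℤ) := by
        have h1 := hWg_le 0 hb0
        have h2 := hWh_le 0 hc0'
        simp only [hFg, hFh, Nat.cast_zero, mul_zero, add_zero] at h1 h2
        have : (n : ℤ) * padicValRat p (g.coeff 0) + (n : ℤ) * padicValRat p (h.coeff 0)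
            = (n : ℤ) * r := by rw [← mul_add, hv00]
        linarith
      have hWsum : Wg + Wh = (n * r : ℤ) := le_antisymm hup hkey
      -- equalities at the bottom
      have hWg0 : Wg = (n : ℤ) * padicValRat p (g.coeff 0) := by
        have h1 := hWg_le 0 hb0
        have h2 := hWh_le 0 hc0'
        simp only [hFg, hFh, Nat.cast_zero, mul_zero, add_zero] at h1 h2
        have h3 : (n : ℤ) * padicValRat p (g.coeff 0) + (n : ℤ) * padicValRat p (h.coeff 0)
            = (n : ℤ) * r := by rw [← mul_add, hv00]
        push_cast at hWsum
        linarith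
      -- equalities at the top
      have hlead' : padicValRat p (g.coeff s) + padicValRat p (h.coeff t) = 0 := by
        have h1 : padicValRat p (g.leadingCoeff * h.leadingCoeff) = 0 := by
          rw [← Polynomial.leadingCoeff_mul]; exact hlead
        rw [padicValRat.mul (Polynomial.leadingCoeff_ne_zero.mpr hgne)
          (Polynomial.leadingCoeff_ne_zero.mpr hhne)] at h1
        rw [hs, ht, Polynomial.coeff_natDegree, Polynomial.coeff_natDegree]
        exact h1
      have hWgs : Wg = (n : ℤ) * padicValRat p (g.coeff s) + r * s := by
        have h1 := hWg_le s hbs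
        have h2 := hWh_le t hct
        simp only [hFg, hFh] at h1 h2
        have h3 : ((n : ℤ) * padicValRat p (g.coeff s) + r * s)
            + ((n : ℤ) * padicValRat p (h.coeff t) + r * t) = (n : ℤ) * r := by
          have h4 : (n : ℤ) * padicValRat p (g.coeff s) + (n : ℤ) * padicValRat p (h.coeff t)
              = 0 := by rw [← mul_add, hlead', mul_zero]
          have h5 : (r : ℤ) * s + r * t = r * n := by
            push_cast [← hst]; ring
          push_cast
          push_cast at h4 h5
          linarith
        push_cast at hWsum
        linarith
      -- conclude divisibility
      have hdvd : (n : ℤ) ∣ (r * s : ℤ) := by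
        have : (r : ℤ) * s = (n : ℤ) *
            (padicValRat p (g.coeff 0) - padicValRat p (g.coeff s)) := by
          rw [mul_sub]
          have := hWg0 ▸ hWgs
          linarith
        exact ⟨_, this⟩
      have hdvdn : n ∣ r * s := by exact_mod_cast hdvd
      have hns : n ∣ s := (Nat.Coprime.dvd_of_dvd_mul_left hcop.symm) hdvdn
      have := Nat.le_of_dvd hs1 hns
      omega

/-- Weight bound for powers of `f`. -/
private lemma pow_coeff_bound (p r : ℕ) [Fact p.Prime] (f : Polynomial ℚ) (n : ℕ)
    (hn : 1 ≤ n)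
    (hA : ∀ k, f.coeff k ≠ 0 → (n * r : ℤ) ≤ n * padicValRat p (f.coeff k) + r * k) :
    ∀ (i k : ℕ), (f ^ i).coeff k ≠ 0 →
      (n * r * i : ℤ) ≤ n * padicValRat p ((f ^ i).coeff k) + r * k := by
  intro i
  induction i with
  | zero =>
    intro k hk
    simp only [pow_zero, Polynomial.coeff_one] at hk ⊢
    by_cases hk0 : k = 0
    · subst hk0
      simp [padicValRat.one]
    · simp [hk0] at hk
  | succ i ih =>
    intro k hk
    rw [pow_succ] at hk ⊢
    rw [Polynomial.coeff_mul] at hk ⊢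
    have hnpos : (0 : ℚ) < (n : ℚ) := by exact_mod_cast hn
    have hsum := pv_sum (p := p) (Finset.HasAntidiagonal.antidiagonal k)
      (fun x => (f ^ i).coeff x.1 * f.coeff x.2)
      (((n * r * (i + 1) : ℤ) - (r * k : ℤ)) / (n : ℚ)) ?_ hk
    · rw [div_le_iff₀ hnpos] at hsum
      have h' : ((n * r * (i + 1) : ℤ) : ℚ) - ((r * k : ℤ) : ℚ)
          ≤ (padicValRat p (∑ x ∈ Finset.HasAntidiagonal.antidiagonal k, (f ^ i).coeff x.1 * f.coeff x.2) : ℚ)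
            * (n : ℚ) := hsum
      have hgoal : ((n * r * (i + 1) : ℤ) : ℚ) ≤
          (((n : ℤ) * padicValRat p
            (∑ x ∈ Finset.HasAntidiagonal.antidiagonal k, (f ^ i).coeff x.1 * f.coeff x.2)
            + (r * k : ℤ) : ℤ) : ℚ) := by push_cast at h' ⊢; linarith
      exact_mod_cast hgoal
    · rintro ⟨a, b⟩ hab hnz
      simp only [Finset.HasAntidiagonal.mem_antidiagonal] at hab
      have h1 : (f ^ i).coeff a ≠ 0 := left_ne_zero_of_mul hnz
      have h2 : f.coeff b ≠ 0 := right_ne_zero_of_mul hnz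
      rw [padicValRat.mul h1 h2]
      have e1 : (n : ℚ) * r * i
          ≤ (n : ℚ) * (padicValRat p ((f ^ i).coeff a) : ℚ) + (r : ℚ) * a := by
        exact_mod_cast ih a h1
      have e2 : (n : ℚ) * r
          ≤ (n : ℚ) * (padicValRat p (f.coeff b) : ℚ) + (r : ℚ) * b := by
        exact_mod_cast hA b h2
      rw [div_le_iff₀ hnpos]
      have hab' : (a : ℚ) + b = k := by exact_mod_cast hab
      push_cast
      nlinarith [e1, e2, hab']

/-- Self-composition preserves the Dumas property (when `deg f ≥ 2`). -/
private lemma isDumas_comp_self (p r : ℕ) (hp : p.Prime) (hr : 1 ≤ r)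
    (f : Polynomial ℚ) (hf : IsDumas p r f) (h2n : 2 ≤ f.natDegree) :
    IsDumas p r (f.comp f) := by
  classical
  haveI : Fact p.Prime := ⟨hp⟩
  have hA := hA_of_isDumas p r f hf
  obtain ⟨hdeg, hcop, h0, hv0, hlead, hpure⟩ := hf
  set n := f.natDegree with hn
  have hfne : f ≠ 0 := fun h => h0 (by simp [h])
  have hndeg : (f.comp f).natDegree = n * n := by
    rw [Polynomial.natDegree_comp]
  have hB := pow_coeff_bound p r f n hdeg hA
  -- constant coefficient analysis
  have hc0eq : (f.comp f).coeff 0 = f.eval (f.coeff 0) := by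
    rw [Polynomial.coeff_zero_eq_eval_zero, Polynomial.eval_comp,
      ← Polynomial.coeff_zero_eq_eval_zero]
  have ha0 : f.coeff 0 ≠ 0 := h0
  have heval : f.eval (f.coeff 0)
      = ∑ i ∈ Finset.range (n + 1), f.coeff i * f.coeff 0 ^ i := by
    rw [Polynomial.eval_eq_sum_range]
  -- valuation of each term with i ≠ 0 is > r
  have hstrict : ∀ i ∈ Finset.range (n + 1), i ≠ (0 : ℕ) →
      (fun j => f.coeff j * f.coeff 0 ^ j) i ≠ 0 →
      padicValRat p ((fun j => f.coeff j * f.coeff 0 ^ j) (0 : ℕ))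
        < padicValRat p ((fun j => f.coeff j * f.coeff 0 ^ j) i) := by
    intro i _ hi0 hnz
    simp only at hnz ⊢
    have hci : f.coeff i ≠ 0 := left_ne_zero_of_mul hnz
    have hi1 : 1 ≤ i := Nat.one_le_iff_ne_zero.mpr hi0
    rw [padicValRat.mul hci (pow_ne_zero _ ha0), padicValRat.pow (f.coeff 0), hv0]
    simp only [pow_zero, mul_one]
    rw [hv0]
    -- need : r < v(f.coeff i) + i * r
    have e1 := hA i hci
    -- n*r ≤ n*v + r*i, so n*(v + i*r) = n*v + n*i*r ≥ n*r - r*i + n*i*r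
    --   = n*r + r*i*(n-1) ≥ n*r + r*(n-1) > n*r  since r ≥ 1, n ≥ 2, i ≥ 1
    have hlt : (n : ℤ) * r < n * (padicValRat p (f.coeff i) + i * r) := by
      have h1 : (1 : ℤ) ≤ r := by exact_mod_cast hr
      have h3 : (1 : ℤ) ≤ i := by exact_mod_cast hi1
      have h4 : (2 : ℤ) ≤ n := by exact_mod_cast h2n
      have h5 : (1 : ℤ) ≤ (r : ℤ) * i :=
        le_trans (by norm_num) (mul_le_mul h1 h3 (by norm_num) (by linarith))
      have h6 : ((r : ℤ) * i) * 1 ≤ ((r : ℤ) * i) * ((n : ℤ) - 1) :=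
        mul_le_mul_of_nonneg_left (by linarith) (by linarith)
      nlinarith [e1, h5, h6]
    have hnposZ : (0 : ℤ) < (n : ℤ) := by exact_mod_cast hdeg
    exact lt_of_mul_lt_mul_left hlt (le_of_lt hnposZ)
  have h00 : (fun j => f.coeff j * f.coeff 0 ^ j) (0 : ℕ) ≠ 0 := by
    simp only [pow_zero, mul_one]; exact ha0
  have hkey := pv_sum_eq (p := p) (Finset.range (n + 1))
      (fun j => f.coeff j * f.coeff 0 ^ j) 0 (Finset.mem_range.mpr (by omega)) h00 hstrict
  obtain ⟨hsne, hsval⟩ := hkey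
  have hc0ne : (f.comp f).coeff 0 ≠ 0 := by rw [hc0eq, heval]; exact hsne
  have hc0val : padicValRat p ((f.comp f).coeff 0) = (r : ℤ) := by
    rw [hc0eq, heval, hsval]
    simp only [pow_zero, mul_one]
    exact hv0
  -- leading coefficient
  have hlcne : f.leadingCoeff ≠ 0 := Polynomial.leadingCoeff_ne_zero.mpr hfne
  have hlcval : padicValRat p (f.comp f).leadingCoeff = 0 := by
    rw [Polynomial.leadingCoeff_comp (by omega)]
    rw [padicValRat.mul hlcne (pow_ne_zero _ hlcne), padicValRat.pow f.leadingCoeff, hlead]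
    simp
  -- purity
  refine ⟨by rw [hndeg]; nlinarith, by rw [hndeg]; exact hcop.mul_right hcop,
    hc0ne, hc0val, hlcval, ?_⟩
  intro k hkle hkne
  rw [hndeg] at hkle ⊢
  -- integer bound : n*n*r ≤ n*n*v(c_k) + r*k
  have hcoeff : (f.comp f).coeff k = ∑ i ∈ f.support, f.coeff i * (f ^ i).coeff k := by
    rw [Polynomial.comp_eq_sum_left, Polynomial.sum_def, Polynomial.finset_sum_coeff]
    exact Finset.sum_congr rfl fun i _ => by rw [Polynomial.coeff_C_mul]
  rw [hcoeff] at hkne ⊢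
  have hnposQ : (0 : ℚ) < ((n * n : ℕ) : ℚ) := by
    have : (0:ℕ) < n * n := by nlinarith
    exact_mod_cast this
  have hsum := pv_sum (p := p) f.support (fun i => f.coeff i * (f ^ i).coeff k)
      (((n * n * r : ℤ) - (r * k : ℤ)) / ((n * n : ℕ) : ℚ)) ?_ hkne
  · -- convert to the real inequality
    rw [div_le_iff₀ hnposQ] at hsum
    set v := padicValRat p (∑ i ∈ f.support, f.coeff i * (f ^ i).coeff k) with hv
    have hZ : ((n * n * r : ℤ) : ℚ) ≤ (v : ℚ) * ((n * n : ℕ) : ℚ) + ((r * k : ℤ) : ℚ) := by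
      push_cast at hsum ⊢; linarith
    have hR : ((n : ℝ) * n * r) ≤ (v : ℝ) * ((n : ℝ) * n) + (r : ℝ) * k := by
      have := hZ
      push_cast at this ⊢
      exact_mod_cast this
    have hNR : (0 : ℝ) < (n : ℝ) * n := by
      have : (0:ℝ) < (n:ℝ) := by exact_mod_cast hdeg
      nlinarith
    have hgoal : (r : ℝ) * (1 - (k : ℝ) / ((n : ℝ) * n)) ≤ (v : ℝ) := by
      have heq : (r : ℝ) * (1 - (k : ℝ) / ((n : ℝ) * n))
          = ((n : ℝ) * n * r - (r : ℝ) * k) / ((n : ℝ) * n) := by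
        field_simp
      rw [heq, div_le_iff₀ hNR]
      linarith [hR]
    -- match the goal's cast form
    have : ((n * n : ℕ) : ℝ) = (n : ℝ) * n := by push_cast; ring
    rw [this]
    exact hgoal
  · -- per-term bound
    intro i _ hnz
    have h1 : f.coeff i ≠ 0 := left_ne_zero_of_mul hnz
    have h2 : (f ^ i).coeff k ≠ 0 := right_ne_zero_of_mul hnz
    have hkni : k ≤ n * i := by
      have := le_natDegree_of_ne_zero h2
      rwa [Polynomial.natDegree_pow, ← hn, mul_comm] at this
    rw [padicValRat.mul h1 h2]
    have e1 : (n : ℚ) * r ≤ (n : ℚ) * (padicValRat p (f.coeff i) : ℚ) + (r : ℚ) * i := by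
      exact_mod_cast hA i h1
    have e2 : (n : ℚ) * r * i
        ≤ (n : ℚ) * (padicValRat p ((f ^ i).coeff k) : ℚ) + (r : ℚ) * k := by
      exact_mod_cast hB i k h2
    rw [div_le_iff₀ hnposQ]
    have hknir : (k : ℚ) ≤ (n : ℚ) * i := by exact_mod_cast hkni
    have hrnn : (0:ℚ) ≤ (r:ℚ) := by positivity
    have hn1 : (1:ℚ) ≤ (n:ℚ) := by exact_mod_cast hdeg
    push_cast
    nlinarith [e1, e2, hknir, hrnn, hn1,
      mul_le_mul_of_nonneg_left hknir (mul_nonneg hrnn (by linarith : (0:ℚ) ≤ (n:ℚ) - 1))]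

/-- If `f ∈ ℚ[x]` is `p^r`-Dumas, then `f ∘ f` is irreducible over `ℚ`. -/
theorem dumas_comp_self_irreducible (p r : ℕ) (hp : p.Prime) (hr : 1 ≤ r)
    (f : Polynomial ℚ) (hf : IsDumas p r f) :
    Irreducible (f.comp f) := by
  rcases Nat.lt_or_ge f.natDegree 2 with h2 | h2
  · -- degree 1 case
    have hn1 : f.natDegree = 1 := by
      have := hf.1; omega
    have hdeg : (f.comp f).natDegree = 1 := by
      rw [Polynomial.natDegree_comp, hn1]
    have hne : f.comp f ≠ 0 := fun h => by simp [h] at hdeg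
    refine Polynomial.irreducible_of_degree_eq_one ?_
    rw [Polynomial.degree_eq_natDegree hne, hdeg]
    rfl
  · exact isDumas_irreducible p r hp _ (isDumas_comp_self p r hp hr f hf h2)
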